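/- The n-th Bell number equals the n-th moment of a Poisson random variable with intensity 1: B_n = Σ_{k=1}^n S(n,k) = E[X^n] where X ∼ Poisson(1), i.e., B_n = e^{-1} Σ_{m≥0} m^n / m!. -/

import Mathlib

open Finset Function

section KerPart

variable {α β : Type*} [Fintype α] [DecidableEq α] [DecidableEq β]

instance kerDec (f : α → β) : DecidableRel (Setoid.ker f).r :=
  fun a b => inferInstanceAs (Decidable (f a = f b))

/-- The partition of the universe into fibers of `f`. -/
def kerPart (f : α → β) : Finpartition (univ : Finset α) :=
  Finpartition.ofSetoid (Setoid.ker f)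

lemma mem_part_kerPart (f : α → β) (a b : α) :
    b ∈ (kerPart f).part a ↔ f a = f b :=
  Finpartition.mem_part_ofSetoid_iff_rel

lemma Finpartition.eq_of_part_eq {P Q : Finpartition (univ : Finset α)}
    (h : ∀ a, P.part a = Q.part a) : P = Q := by
  have key : ∀ (P Q : Finpartition (univ : Finset α)),
      (∀ a, P.part a = Q.part a) → P.parts ⊆ Q.parts := by
    intro P Q h t ht
    obtain ⟨a, ha⟩ := P.nonempty_of_mem_parts ht
    have : P.part a = t := P.part_eq_of_mem ht ha
    rw [← this, h a]
    exact Q.part_mem.2 (mem_univ a)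
  exact Finpartition.ext (Finset.Subset.antisymm (key P Q h)
    (key Q P fun a => (h a).symm))

variable (σ : Finpartition (univ : Finset α))

/-- A representative of each part. -/
noncomputable def prep (p : σ.parts) : α :=
  (σ.nonempty_of_mem_parts p.2).choose

lemma prep_mem (p : σ.parts) : prep σ p ∈ (p : Finset α) :=
  (σ.nonempty_of_mem_parts p.2).choose_spec

/-- Functions with fiber partition `σ` correspond to injections of parts. -/
noncomputable def fiberEquiv : {f : α → β // kerPart f = σ} ≃ (σ.parts ↪ β) where
  toFun fh := by
    obtain ⟨f, hf⟩ := fh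
    have key : ∀ a b, b ∈ σ.part a ↔ f a = f b := by
      subst hf; exact fun a b => mem_part_kerPart f a b
    refine ⟨fun p => f (prep σ p), ?_⟩
    intro p q hpq
    have h1 : prep σ q ∈ σ.part (prep σ p) := (key _ _).2 hpq
    have h2 : σ.part (prep σ p) = (p : Finset α) :=
      σ.part_eq_of_mem p.2 (prep_mem σ p)
    have h3 : σ.part (prep σ q) = (q : Finset α) :=
      σ.part_eq_of_mem q.2 (prep_mem σ q)
    have h4 : σ.part (prep σ q) = σ.part (prep σ p) :=
      σ.part_eq_of_mem (σ.part_mem.2 (mem_univ _)) h1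
    exact Subtype.ext (by rw [← h2, ← h3, h4])
  invFun g := by
    refine ⟨fun a => g ⟨σ.part a, σ.part_mem.2 (mem_univ a)⟩, ?_⟩
    apply Finpartition.eq_of_part_eq
    intro a
    ext b
    rw [mem_part_kerPart]
    constructor
    · intro h
      have h2 : σ.part a = σ.part b := Subtype.ext_iff.1 (g.injective h)
      rw [σ.mem_part_iff_part_eq_part (mem_univ b) (mem_univ a), h2]
    · intro h
      have := σ.part_eq_of_mem (σ.part_mem.2 (mem_univ a)) h
      exact congrArg g (Subtype.ext this.symm)
  left_inv := by
    rintro ⟨f, hf⟩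
    have key : ∀ a b, b ∈ σ.part a ↔ f a = f b := by
      subst hf; exact fun a b => mem_part_kerPart f a b
    apply Subtype.ext
    funext a
    exact ((key a _).1 (prep_mem σ ⟨σ.part a, σ.part_mem.2 (mem_univ a)⟩)).symm
  right_inv := by
    intro g
    ext p
    exact congrArg g (Subtype.ext (σ.part_eq_of_mem p.2 (prep_mem σ p)))

end KerPart

theorem pow_eq_sum_descFactorial (n m : ℕ) :
    m ^ n = ∑ σ : Finpartition (univ : Finset (Fin n)),
      m.descFactorial σ.parts.card := by
  classical
  calc m ^ n = Fintype.card (Fin n → Fin m) := by simp [Fintype.card_fun]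
    _ = Fintype.card (Σ σ : Finpartition (univ : Finset (Fin n)),
          {f : Fin n → Fin m // kerPart f = σ}) :=
        (Fintype.card_congr (Equiv.sigmaFiberEquiv kerPart)).symm
    _ = ∑ σ : Finpartition (univ : Finset (Fin n)),
          Fintype.card {f : Fin n → Fin m // kerPart f = σ} := Fintype.card_sigma
    _ = ∑ σ : Finpartition (univ : Finset (Fin n)),
          m.descFactorial σ.parts.card := by
        refine Finset.sum_congr rfl fun σ _ => ?_
        rw [Fintype.card_congr (fiberEquiv σ), Fintype.card_embedding_eq,
          Fintype.card_coe, Fintype.card_fin]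

lemma descFactorial_div_factorial_add (k j : ℕ) :
    ((j + k).descFactorial k : ℝ) / (j + k).factorial = 1 / j.factorial := by
  have h : j.factorial * (j + k).descFactorial k = (j + k).factorial := by
    have := Nat.factorial_mul_descFactorial (Nat.le_add_left k j)
    simpa [Nat.add_sub_cancel] using this
  rw [div_eq_div_iff (by positivity) (by positivity), one_mul]
  have h2 : (j + k).descFactorial k * j.factorial = (j + k).factorial := by
    rw [mul_comm]; exact h
  exact_mod_cast h2

lemma descFactorial_div_eq_zero {k m : ℕ} (hm : m ∉ Set.range (· + k)) :
    (m.descFactorial k : ℝ) / m.factorial = 0 := by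
  have hlt : m < k := by
    by_contra h
    push_neg at h
    exact hm ⟨m - k, Nat.sub_add_cancel h⟩
  rw [Nat.descFactorial_eq_zero_iff_lt.2 hlt]
  simp

lemma summable_descFactorial (k : ℕ) :
    Summable (fun m : ℕ => (m.descFactorial k : ℝ) / m.factorial) := by
  have inj : Function.Injective (fun j : ℕ => j + k) := add_left_injective k
  have h1 : Summable (fun j : ℕ => 1 / (j.factorial : ℝ)) := by
    simpa using Real.summable_pow_div_factorial 1
  exact (Function.Injective.summable_iff inj
    (fun m hm => descFactorial_div_eq_zero hm)).1
    (h1.congr fun j => (descFactorial_div_factorial_add k j).symm)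

lemma tsum_descFactorial (k : ℕ) :
    ∑' m : ℕ, (m.descFactorial k : ℝ) / m.factorial = Real.exp 1 := by
  have inj : Function.Injective (fun j : ℕ => j + k) := add_left_injective k
  have hsupp : Function.support
      (fun m : ℕ => (m.descFactorial k : ℝ) / m.factorial) ⊆
        Set.range (fun j : ℕ => j + k) := by
    intro m hm
    by_contra h
    exact hm (descFactorial_div_eq_zero h)
  rw [← Function.Injective.tsum_eq inj hsupp]
  have : ∀ j : ℕ, (((j + k).descFactorial k : ℝ)) / (j + k).factorial
      = 1 / j.factorial := descFactorial_div_factorial_add k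
  rw [tsum_congr this, Real.exp_eq_exp_ℝ, NormedSpace.exp_eq_tsum_div]
  simp

set_option maxHeartbeats 1000000 in
/-- **Bell numbers as Poisson moments.**  For `n ≥ 1`, the `n`-th Bell number
`B_n` (the number of set partitions of `[n]`) equals `∑_{k=1}^n S(n,k)` where `S(n,k)`
is the Stirling number of the second kind (the number of partitions into exactly `k`
blocks), and equals the `n`-th moment of a Poisson random variable of intensity `1`:
`B_n = E[X^n] = e^{-1} ∑_{m≥0} m^n / m!`. -/
theorem bell_number_eq_poisson_moment (n : ℕ) (hn : 1 ≤ n) :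
    Nat.card (Finpartition (Finset.univ : Finset (Fin n)))
        = ∑ k ∈ Finset.Icc 1 n,
            Nat.card {σ : Finpartition (Finset.univ : Finset (Fin n)) // σ.parts.card = k} ∧
    (Nat.card (Finpartition (Finset.univ : Finset (Fin n))) : ℝ)
        = Real.exp (-1) * ∑' m : ℕ, (m : ℝ) ^ n / m.factorial := by
  classical
  have hne : (univ : Finset (Fin n)) ≠ ⊥ := by
    have : Nonempty (Fin n) := ⟨⟨0, hn⟩⟩
    simpa [Finset.bot_eq_empty] using Finset.univ_nonempty.ne_empty
  constructor
  · rw [Nat.card_eq_fintype_card, ← Finset.card_univ]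
    have hmem : ∀ σ ∈ (univ : Finset (Finpartition (univ : Finset (Fin n)))),
        σ.parts.card ∈ Finset.Icc 1 n := by
      intro σ _
      rw [Finset.mem_Icc]
      refine ⟨Finset.card_pos.2 (σ.parts_nonempty hne), ?_⟩
      simpa using σ.card_parts_le_card
    rw [Finset.card_eq_sum_card_fiberwise hmem]
    refine Finset.sum_congr rfl fun k _ => ?_
    rw [Nat.card_eq_fintype_card, Fintype.card_subtype]
  · have h1 : ∀ m : ℕ, (m : ℝ) ^ n / m.factorial
        = ∑ σ : Finpartition (univ : Finset (Fin n)),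
            (m.descFactorial σ.parts.card : ℝ) / m.factorial := by
      intro m
      rw [← Finset.sum_div]
      congr 1
      exact_mod_cast pow_eq_sum_descFactorial n m
    rw [tsum_congr h1]
    rw [Summable.tsum_finsetSum (fun σ _ => summable_descFactorial σ.parts.card)]
    simp only [tsum_descFactorial]
    rw [Finset.sum_const, Finset.card_univ, nsmul_eq_mul, Nat.card_eq_fintype_card,
      Real.exp_neg]
    rw [← mul_assoc, mul_comm ((Real.exp 1)⁻¹), mul_assoc,
      inv_mul_cancel₀ (Real.exp_ne_zero 1), mul_one]
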